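/- Let a, b, s, θ be real numbers and let C be the 4×4 complex matrix whose only nonzero entries are the diagonal entries C₁₁ = (1 − s + e^{−a})/2, C₂₂ = (1 + s − e^{−a})/2, C₃₃ = (1 − s − e^{−a})/2, C₄₄ = (1 + s + e^{−a})/2 and the off-diagonal entries C₁₄ = e^{−b}·e^{−iθ} and C₄₁ = e^{−b}·e^{iθ}. Then C is positive semidefinite if and only if |s| ≤ 1 − e^{−a} and s² ≤ (1 + e^{−a})² − 4e^{−2b}. -/

import Mathlib

open Real Complex Matrix
open scoped ComplexOrder

set_option maxHeartbeats 1600000 in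
private lemma choi_aux (θ α β γ δ D t : ℝ)
    (ht : 0 ≤ t) (hβ : 0 ≤ β) (hγ : 0 ≤ γ) (hδ : 0 < δ)
    (hα : α = t + D^2/δ) :
    Matrix.PosSemidef
      !![(α : ℂ), 0, 0, (D : ℂ) * Complex.exp (-(θ : ℂ) * Complex.I);
         0, (β : ℂ), 0, 0;
         0, 0, (γ : ℂ), 0;
         (D : ℂ) * Complex.exp ((θ : ℂ) * Complex.I), 0, 0, (δ : ℂ)] := by
  have e1 : Complex.exp (-((θ:ℂ)*Complex.I)) * Complex.exp ((θ:ℂ)*Complex.I) = 1 := by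
    rw [← Complex.exp_add, neg_add_cancel, Complex.exp_zero]
  have e2 : (starRingEnd ℂ) (Complex.exp ((θ:ℂ)*Complex.I)) =
      Complex.exp (-((θ:ℂ)*Complex.I)) := by
    rw [← Complex.exp_conj]; congr 1; simp
  have e3 : (starRingEnd ℂ) (Complex.exp (-((θ:ℂ)*Complex.I))) =
      Complex.exp ((θ:ℂ)*Complex.I) := by
    rw [← Complex.exp_conj]; congr 1; simp
  have hsqne : Real.sqrt δ ≠ 0 := by positivity
  have hsqneC : ((Real.sqrt δ : ℝ):ℂ) ≠ 0 := by exact_mod_cast hsqne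
  have c1 : ((Real.sqrt t : ℝ):ℂ) * ((Real.sqrt t : ℝ):ℂ) = ((t:ℝ):ℂ) := by
    norm_cast; exact Real.mul_self_sqrt ht
  have hss : ((Real.sqrt δ : ℝ):ℂ) * ((Real.sqrt δ : ℝ):ℂ) = ((δ:ℝ):ℂ) := by
    norm_cast; exact Real.mul_self_sqrt hδ.le
  have c2 : ((D:ℝ):ℂ)/((Real.sqrt δ : ℝ):ℂ) * (((D:ℝ):ℂ)/((Real.sqrt δ : ℝ):ℂ)) =
      ((D:ℝ):ℂ)^2/((δ:ℝ):ℂ) := by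
    rw [div_mul_div_comm, hss]; ring_nf
  have c3 : ((D:ℝ):ℂ)/((Real.sqrt δ : ℝ):ℂ) * ((Real.sqrt δ : ℝ):ℂ) = ((D:ℝ):ℂ) :=
    div_mul_cancel₀ _ hsqneC
  have hαC : ((α:ℝ):ℂ) = ((t:ℝ):ℂ) + ((D:ℝ):ℂ)^2/((δ:ℝ):ℂ) := by
    have := congrArg (Complex.ofReal) hα
    push_cast at this; exact this
  have hCA :
      (!![(α : ℂ), 0, 0, (D : ℂ) * Complex.exp (-(θ : ℂ) * Complex.I);
         0, (β : ℂ), 0, 0;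
         0, 0, (γ : ℂ), 0;
         (D : ℂ) * Complex.exp ((θ : ℂ) * Complex.I), 0, 0, (δ : ℂ)]) =
      (!![(Real.sqrt t : ℂ), 0, 0, 0;
         0, (Real.sqrt β : ℂ), 0, 0;
         0, 0, (Real.sqrt γ : ℂ), 0;
         ((D / Real.sqrt δ : ℝ) : ℂ) * Complex.exp ((θ:ℂ)*Complex.I), 0, 0,
           (Real.sqrt δ : ℂ)])ᴴ *
      (!![(Real.sqrt t : ℂ), 0, 0, 0;
         0, (Real.sqrt β : ℂ), 0, 0;
         0, 0, (Real.sqrt γ : ℂ), 0;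
         ((D / Real.sqrt δ : ℝ) : ℂ) * Complex.exp ((θ:ℂ)*Complex.I), 0, 0,
           (Real.sqrt δ : ℂ)]) := by
    ext i j
    fin_cases i <;> fin_cases j <;>
      simp [Matrix.mul_apply, Fin.sum_univ_four, Matrix.conjTranspose_apply, e2, e3,
        Matrix.vecHead, Matrix.vecTail, -Complex.ofReal_exp]
    · -- (0,0)
      linear_combination hαC - c1 -
        Complex.exp (-((θ:ℂ)*Complex.I)) * Complex.exp ((θ:ℂ)*Complex.I) * c2 -
        (((D:ℝ):ℂ)^2/((δ:ℝ):ℂ)) * e1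
    · -- (0,3)
      linear_combination -(Complex.exp (-((θ:ℂ)*Complex.I))) * c3
    · -- (1,1)
      norm_cast; exact (Real.mul_self_sqrt hβ).symm
    · -- (2,2)
      norm_cast; exact (Real.mul_self_sqrt hγ).symm
    · -- (3,0)
      linear_combination -(Complex.exp ((θ:ℂ)*Complex.I)) * c3
    · -- (3,3)
      norm_cast; exact (Real.mul_self_sqrt hδ.le).symm
  rw [hCA]
  exact Matrix.posSemidef_conjTranspose_mul_self _

set_option maxHeartbeats 1600000 in
/-- The Choi matrix of the dynamical map of a two-level open quantum system is
positive semidefinite iff `|s| ≤ 1 - e^{-a}` and `s² ≤ (1 + e^{-a})² - 4 e^{-2b}`. -/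
theorem choi_posSemidef_iff (a b s θ : ℝ)
    (C : Matrix (Fin 4) (Fin 4) ℂ)
    (hC : C = !![(((1 - s + Real.exp (-a)) / 2 : ℝ) : ℂ), 0, 0,
                  (Real.exp (-b) : ℂ) * Complex.exp (-(θ : ℂ) * Complex.I);
                 0, (((1 + s - Real.exp (-a)) / 2 : ℝ) : ℂ), 0, 0;
                 0, 0, (((1 - s - Real.exp (-a)) / 2 : ℝ) : ℂ), 0;
                 (Real.exp (-b) : ℂ) * Complex.exp ((θ : ℂ) * Complex.I), 0, 0,
                  (((1 + s + Real.exp (-a)) / 2 : ℝ) : ℂ)]) :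
    C.PosSemidef ↔
      |s| ≤ 1 - Real.exp (-a) ∧
      s ^ 2 ≤ (1 + Real.exp (-a)) ^ 2 - 4 * Real.exp (-(2 * b)) := by
  set E := Real.exp (-a) with hEdef
  set D := Real.exp (-b) with hDdef
  have hE : (0:ℝ) < E := Real.exp_pos _
  have hD : (0:ℝ) < D := Real.exp_pos _
  have hD2 : Real.exp (-(2*b)) = D ^ 2 := by
    rw [hDdef, ← Real.exp_nat_mul]; ring_nf
  have e1 : Complex.exp (-((θ:ℂ)*Complex.I)) * Complex.exp ((θ:ℂ)*Complex.I) = 1 := by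
    rw [← Complex.exp_add, neg_add_cancel, Complex.exp_zero]
  have e2 : (starRingEnd ℂ) (Complex.exp ((θ:ℂ)*Complex.I)) =
      Complex.exp (-((θ:ℂ)*Complex.I)) := by
    rw [← Complex.exp_conj]; congr 1; simp
  constructor
  · intro h
    have h1 := h.dotProduct_mulVec_nonneg ![0,1,0,0]
    have h2 := h.dotProduct_mulVec_nonneg ![0,0,1,0]
    have h3 := h.dotProduct_mulVec_nonneg ![(((1 + s + E) / 2 : ℝ) : ℂ), 0, 0,
        -(D : ℂ) * Complex.exp ((θ : ℂ) * Complex.I)]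
    rw [hC] at h1 h2 h3
    simp [dotProduct, Matrix.mulVec, Fin.sum_univ_four, Complex.nonneg_iff,
      -Complex.ofReal_exp] at h1 h2
    simp only [dotProduct, Matrix.mulVec, Fin.sum_univ_four] at h3
    simp [e2, map_ofNat, -Complex.ofReal_exp] at h3
    have hL : (D:ℂ) * Complex.exp (-((θ:ℂ) * Complex.I)) *
        ((D:ℂ) * Complex.exp ((θ:ℂ) * Complex.I) * ((1 + (s:ℂ) + (E:ℂ)) / 2) +
          -((1 + (s:ℂ) + (E:ℂ)) / 2 * ((D:ℂ) * Complex.exp ((θ:ℂ) * Complex.I)))) =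
        ((0:ℝ):ℂ) := by
      push_cast; ring
    have hR : (1 + (s:ℂ) + (E:ℂ)) / 2 *
        ((1 - (s:ℂ) + (E:ℂ)) / 2 * ((1 + (s:ℂ) + (E:ℂ)) / 2) +
          -((D:ℂ) * Complex.exp (-((θ:ℂ) * Complex.I)) *
            ((D:ℂ) * Complex.exp ((θ:ℂ) * Complex.I)))) =
        ((((1+s+E)/2) * ((1-s+E)/2*((1+s+E)/2) - D^2) : ℝ) : ℂ) := by
      push_cast
      linear_combination (-((1 + (s:ℂ) + (E:ℂ)) / 2 * (D:ℂ)^2)) * e1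
    rw [hL, hR, Complex.real_le_real] at h3
    have habs : |s| ≤ 1 - E := abs_le.2 ⟨by linarith, by linarith⟩
    have hδ : (0:ℝ) < (1+s+E)/2 := by
      have := (abs_le.1 habs).1; linarith
    have key : D^2 ≤ (1-s+E)/2*((1+s+E)/2) := by nlinarith
    refine ⟨habs, ?_⟩
    rw [hD2]; nlinarith
  · rintro ⟨h1, h2⟩
    have hs := abs_le.1 h1
    have hδ : (0:ℝ) < (1+s+E)/2 := by linarith [hs.1]
    have hβ : (0:ℝ) ≤ (1+s-E)/2 := by linarith [hs.1]
    have hγ : (0:ℝ) ≤ (1-s-E)/2 := by linarith [hs.2]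
    have hkey : D^2 ≤ (1-s+E)/2 * ((1+s+E)/2) := by rw [hD2] at h2; nlinarith
    have ht : 0 ≤ (1-s+E)/2 - D^2/((1+s+E)/2) := by
      rw [sub_nonneg, div_le_iff₀ hδ]; linarith
    have hα : (1-s+E)/2 = ((1-s+E)/2 - D^2/((1+s+E)/2)) + D^2/((1+s+E)/2) := by ring
    rw [hC]
    exact choi_aux θ _ _ _ _ D _ ht hβ hγ hδ hα
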